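/- The Riesz projection is unbounded in the supremum norm: for every constant C > 0 there exists a trigonometric polynomial f(θ) = Σ_{|k| ≤ N} c_k e^{ikθ} such that ‖Σ_{k > 0} c_k e^{ikθ}‖_∞ > C ‖f‖_∞, where ‖·‖_∞ denotes the supremum norm over θ ∈ [0, 2π]. -/

import Mathlib

open Finset Real

namespace RieszAux

/-- Abel summation bound. -/
lemma abel_bound (a b : ℕ → ℝ) (m : ℕ) (C0 : ℝ)
    (hb0 : ∀ k, m ≤ k → 0 ≤ b k)
    (hbm : ∀ k, m ≤ k → b (k + 1) ≤ b k)
    (hS : ∀ j, |∑ k ∈ Finset.Ioc m j, a k| ≤ C0) :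
    ∀ n, |∑ k ∈ Finset.Ioc m n, a k * b k| ≤ C0 * b (m + 1) := by
  have hC0 : 0 ≤ C0 := by simpa using hS m
  have key : ∀ n, m + 1 ≤ n →
      |∑ k ∈ Finset.Ioc m n, a k * b k - (∑ k ∈ Finset.Ioc m n, a k) * b n|
        ≤ C0 * (b (m + 1) - b n) := by
    intro n hn
    induction n, hn using Nat.le_induction with
    | base => simp
    | succ n hn ih =>
      have hsucc : ∀ f : ℕ → ℝ, ∑ k ∈ Finset.Ioc m (n + 1), f k
          = ∑ k ∈ Finset.Ioc m n, f k + f (n + 1) := by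
        intro f
        rw [← Finset.Icc_add_one_left_eq_Ioc, ← Finset.Icc_add_one_left_eq_Ioc,
          Finset.sum_Icc_succ_top (by omega)]
      have hbn : b (n + 1) ≤ b n := hbm n (by omega)
      have hSn := hS n
      calc |∑ k ∈ Finset.Ioc m (n+1), a k * b k - (∑ k ∈ Finset.Ioc m (n+1), a k) * b (n+1)|
          = |(∑ k ∈ Finset.Ioc m n, a k * b k - (∑ k ∈ Finset.Ioc m n, a k) * b n)
              + (∑ k ∈ Finset.Ioc m n, a k) * (b n - b (n+1))| := by
            rw [hsucc (fun k => a k * b k), hsucc a]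
            congr 1; ring
        _ ≤ |∑ k ∈ Finset.Ioc m n, a k * b k - (∑ k ∈ Finset.Ioc m n, a k) * b n|
              + |∑ k ∈ Finset.Ioc m n, a k| * |b n - b (n+1)| := by
            rw [← abs_mul]; exact abs_add_le _ _
        _ ≤ C0 * (b (m+1) - b n) + C0 * (b n - b (n+1)) := by
            have h3 : |∑ k ∈ Finset.Ioc m n, a k| * |b n - b (n+1)| ≤ C0 * (b n - b (n+1)) := by
              have hb' : |b n - b (n+1)| = b n - b (n+1) := abs_of_nonneg (by linarith)
              rw [hb']
              exact mul_le_mul hSn le_rfl (by linarith) hC0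
            exact add_le_add ih h3
        _ = C0 * (b (m+1) - b (n+1)) := by ring
  intro n
  rcases le_or_gt n m with h | h
  · rw [Finset.Ioc_eq_empty (by omega)]
    simpa using mul_nonneg hC0 (hb0 (m+1) (by omega))
  · have h1 := key n h
    have h2 : |(∑ k ∈ Finset.Ioc m n, a k) * b n| ≤ C0 * b n := by
      rw [abs_mul, abs_of_nonneg (hb0 n (by omega))]
      exact mul_le_mul_of_nonneg_right (hS n) (hb0 n (by omega))
    calc |∑ k ∈ Finset.Ioc m n, a k * b k|
        ≤ |∑ k ∈ Finset.Ioc m n, a k * b k - (∑ k ∈ Finset.Ioc m n, a k) * b n|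
          + |(∑ k ∈ Finset.Ioc m n, a k) * b n| := by
          have := abs_add_le (∑ k ∈ Finset.Ioc m n, a k * b k - (∑ k ∈ Finset.Ioc m n, a k) * b n)
            ((∑ k ∈ Finset.Ioc m n, a k) * b n)
          simpa using this
      _ ≤ C0 * (b (m+1) - b n) + C0 * b n := add_le_add h1 h2
      _ = C0 * b (m+1) := by ring


lemma abs_sin_le_abs (x : ℝ) : |Real.sin x| ≤ |x| := by
  rcases eq_or_ne x 0 with rfl | hx
  · simp
  · exact (Real.abs_sin_lt_abs hx).le

lemma abs_exp_sub_one (θ : ℝ) (h0 : 0 ≤ θ) (h2 : θ ≤ 2 * π) :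
    ‖Complex.exp (θ * Complex.I) - 1‖ = 2 * Real.sin (θ / 2) := by
  have h1 : ‖Complex.exp (θ * Complex.I) - 1‖ ^ 2 = 2 - 2 * Real.cos θ := by
    rw [← Complex.normSq_eq_norm_sq, Complex.exp_mul_I]
    have : (Complex.cos θ + Complex.sin θ * Complex.I - 1)
        = Complex.mk (Real.cos θ - 1) (Real.sin θ) := by
      simp [Complex.ext_iff, Complex.cos_ofReal_re, Complex.sin_ofReal_re]
    rw [this, Complex.normSq_mk]
    nlinarith [Real.sin_sq_add_cos_sq θ]
  have h2 : (2 * Real.sin (θ / 2)) ^ 2 = 2 - 2 * Real.cos θ := by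
    have := Real.sin_sq_eq_half_sub (θ / 2)
    have h : 2 * (θ / 2) = θ := by ring
    rw [h] at this
    nlinarith
  have h3 : ‖Complex.exp (θ * Complex.I) - 1‖ ^ 2 = (2 * Real.sin (θ/2)) ^ 2 := by
    rw [h1, h2]
  have := congrArg Real.sqrt h3
  have hsn : 0 ≤ Real.sin (θ / 2) :=
    Real.sin_nonneg_of_nonneg_of_le_pi (by linarith) (by linarith)
  rwa [Real.sqrt_sq (by positivity), Real.sqrt_sq (by linarith)] at this

lemma dirichlet (θ : ℝ) (hθ : 0 < θ) (hθ' : θ < 2 * π) (j : ℕ) :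
    |∑ k ∈ Finset.Ioc 0 j, Real.sin (k * θ)| ≤ 1 / Real.sin (θ / 2) := by
  have hs : 0 < Real.sin (θ / 2) :=
    Real.sin_pos_of_pos_of_lt_pi (by linarith) (by linarith)
  set z : ℂ := Complex.exp (θ * Complex.I) with hz
  have hz1 : z ≠ 1 := by
    rw [hz, Ne, Complex.exp_eq_one_iff]
    rintro ⟨n, hn⟩
    have hI : (θ : ℂ) = n * (2 * π) := by
      have h' : (θ : ℂ) * Complex.I = ((n : ℂ) * (2 * π)) * Complex.I := by
        rw [hn]; ring
      exact mul_right_cancel₀ Complex.I_ne_zero h'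
    have : θ = (n : ℝ) * (2 * π) := by exact_mod_cast hI
    have hπ := Real.pi_pos
    rcases lt_trichotomy n 0 with h | h | h
    · have hn1 : n ≤ -1 := by omega
      have : (n : ℝ) ≤ -1 := by exact_mod_cast hn1
      nlinarith
    · simp [h] at this; linarith
    · have : (1 : ℝ) ≤ (n : ℝ) := by exact_mod_cast h
      nlinarith
  have hsum : ∑ k ∈ Finset.Ioc 0 j, Real.sin (k * θ)
      = (∑ k ∈ Finset.Ioc 0 j, z ^ k).im := by
    rw [Complex.im_sum]
    refine Finset.sum_congr rfl fun k _ => ?_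
    rw [hz, ← Complex.exp_nat_mul]
    have : (k : ℂ) * (θ * Complex.I) = ((k * θ : ℝ) : ℂ) * Complex.I := by push_cast; ring
    rw [this, Complex.exp_ofReal_mul_I_im]
  rw [hsum]
  have hgeom : ∑ k ∈ Finset.Ioc 0 j, z ^ k = z * ((z ^ j - 1) / (z - 1)) := by
    have h1 : ∑ k ∈ Finset.Ioc 0 j, z ^ k = ∑ k ∈ Finset.range j, z ^ (k + 1) := by
      rw [← Finset.Icc_add_one_left_eq_Ioc, ← Finset.Ico_add_one_right_eq_Icc, Finset.sum_Ico_eq_sum_range]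
      simp [add_comm]
    rw [h1]
    have : ∀ k, z ^ (k + 1) = z * z ^ k := fun k => by ring
    simp_rw [this, ← Finset.mul_sum, geom_sum_eq hz1]
  calc |(∑ k ∈ Finset.Ioc 0 j, z ^ k).im| ≤ ‖∑ k ∈ Finset.Ioc 0 j, z ^ k‖ :=
        Complex.abs_im_le_norm _
    _ = ‖z‖ * (‖z ^ j - 1‖ / ‖z - 1‖) := by
        rw [hgeom]; simp [norm_mul, norm_div]
    _ ≤ 1 * (2 / (2 * Real.sin (θ / 2))) := by
        have habs : ‖z‖ = 1 := Complex.norm_exp_ofReal_mul_I θ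
        rw [habs, ← abs_exp_sub_one θ (le_of_lt hθ) (le_of_lt hθ'), ← hz]
        gcongr
        calc ‖z ^ j - 1‖ ≤ ‖z ^ j‖ + 1 := by
              simpa using (norm_sub_le (z ^ j) 1)
          _ ≤ 2 := by rw [norm_pow, habs]; norm_num
    _ = 1 / Real.sin (θ / 2) := by field_simp


lemma sin_sum_bound (n : ℕ) (θ : ℝ) (h0 : 0 ≤ θ) (h2 : θ ≤ 2 * π) :
    |∑ k ∈ Finset.Ioc 0 n, Real.sin (k * θ) / k| ≤ π + 2 := by
  have hπ := Real.pi_pos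
  rcases eq_or_lt_of_le h0 with heq | hθpos
  · rw [← heq]; simp [Real.pi_nonneg]; positivity
  rcases eq_or_lt_of_le h2 with heq2 | hθlt
  · have hzero : ∑ k ∈ Finset.Ioc 0 n, Real.sin (k * θ) / k = 0 := by
      refine Finset.sum_eq_zero fun k _ => ?_
      have h := Real.sin_int_mul_pi (2 * (k : ℤ))
      have : Real.sin (k * θ) = 0 := by
        rw [heq2, show (k : ℝ) * (2 * π) = ((2 * (k:ℤ) : ℤ) : ℝ) * π by push_cast; ring, h]
      rw [this, zero_div]
    rw [hzero]; simp; positivity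
  -- main case 0 < θ < 2π
  set δ := min θ (2 * π - θ) with hδ
  have hδ0 : 0 < δ := lt_min hθpos (by linarith)
  have hδπ : δ ≤ π := by
    rcases le_total θ π with h | h
    · exact le_trans (min_le_left _ _) h
    · exact le_trans (min_le_right _ _) (by linarith)
  have hs : 0 < Real.sin (θ / 2) :=
    Real.sin_pos_of_pos_of_lt_pi (by linarith) (by linarith)
  have hsδ : δ / π ≤ Real.sin (θ / 2) := by
    rcases le_total θ π with h | h
    · calc δ / π ≤ θ / π := by gcongr; exact min_le_left _ _
        _ = 2 / π * (θ / 2) := by field_simp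
        _ ≤ Real.sin (θ / 2) := Real.mul_le_sin (by linarith) (by linarith)
    · calc δ / π ≤ (2 * π - θ) / π := by gcongr; exact min_le_right _ _
        _ = 2 / π * (π - θ / 2) := by field_simp
        _ ≤ Real.sin (π - θ / 2) := Real.mul_le_sin (by linarith) (by linarith)
        _ = Real.sin (θ / 2) := Real.sin_pi_sub _
  have hsink : ∀ k : ℕ, |Real.sin (k * θ)| ≤ k * δ := by
    intro k
    rcases le_total θ π with h | h
    · have hδθ : δ = θ := min_eq_left (by linarith)
      calc |Real.sin (k * θ)| ≤ |(k : ℝ) * θ| := abs_sin_le_abs _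
        _ = k * δ := by rw [hδθ, abs_of_nonneg (by positivity)]
    · have hδθ : δ = 2 * π - θ := min_eq_right (by linarith)
      have hper : Real.sin (k * θ) = Real.sin ((k : ℝ) * (θ - 2 * π)) := by
        rw [← Real.sin_add_nat_mul_two_pi ((k : ℝ) * (θ - 2 * π)) k]
        ring_nf
      calc |Real.sin (k * θ)| = |Real.sin ((k : ℝ) * (θ - 2 * π))| := by rw [hper]
        _ ≤ |(k : ℝ) * (θ - 2 * π)| := abs_sin_le_abs _
        _ = k * δ := by
            rw [hδθ, abs_mul, abs_of_nonneg (by positivity : (0:ℝ) ≤ (k:ℝ)),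
              abs_of_nonpos (by linarith)]
            ring
  set m := ⌊π / δ⌋₊ with hm
  have hm1 : 1 ≤ m := Nat.le_floor (by rw [le_div_iff₀ hδ0]; simpa using hδπ)
  have hmle : (m : ℝ) ≤ π / δ := Nat.floor_le (by positivity)
  have hmlt : π / δ < m + 1 := Nat.lt_floor_add_one _
  have head : ∀ M : ℕ, M ≤ m → |∑ k ∈ Finset.Ioc 0 M, Real.sin (k * θ) / k| ≤ π := by
    intro M hM
    calc |∑ k ∈ Finset.Ioc 0 M, Real.sin (k * θ) / k|
        ≤ ∑ k ∈ Finset.Ioc 0 M, |Real.sin (k * θ) / k| := Finset.abs_sum_le_sum_abs _ _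
      _ ≤ ∑ k ∈ Finset.Ioc 0 M, δ := by
          refine Finset.sum_le_sum fun k hk => ?_
          have hk1 : 1 ≤ k := (Finset.mem_Ioc.1 hk).1
          have hk0 : (0:ℝ) < k := by exact_mod_cast hk1
          have hb := hsink k
          rw [abs_div, Nat.abs_cast, div_le_iff₀ hk0]
          nlinarith
      _ = M * δ := by simp [Finset.sum_const, Nat.card_Ioc]
      _ ≤ m * δ := by
          have : (M:ℝ) ≤ (m:ℝ) := by exact_mod_cast hM
          nlinarith
      _ ≤ π := by rw [← le_div_iff₀ hδ0]; exact hmle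
  rcases le_or_gt n m with hnm | hnm
  · exact le_trans (head n hnm) (by linarith)
  · have hdisj : Disjoint (Finset.Ioc 0 m) (Finset.Ioc m n) := by
      rw [Finset.disjoint_left]
      intro k hk1 hk2
      simp only [Finset.mem_Ioc] at hk1 hk2
      omega
    have hsplit : ∀ f : ℕ → ℝ, ∑ k ∈ Finset.Ioc 0 n, f k
        = ∑ k ∈ Finset.Ioc 0 m, f k + ∑ k ∈ Finset.Ioc m n, f k := by
      intro f
      rw [← Finset.sum_union hdisj, Finset.Ioc_union_Ioc_eq_Ioc (Nat.zero_le m) (le_of_lt hnm)]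
    have hS : ∀ j, |∑ k ∈ Finset.Ioc m j, Real.sin (k * θ)| ≤ 2 / Real.sin (θ / 2) := by
      intro j
      rcases le_or_gt j m with hj | hj
      · rw [Finset.Ioc_eq_empty (by omega)]
        simp; positivity
      · have hd : Disjoint (Finset.Ioc 0 m) (Finset.Ioc m j) := by
          rw [Finset.disjoint_left]
          intro k hk1 hk2
          simp only [Finset.mem_Ioc] at hk1 hk2
          omega
        have h1 : ∑ k ∈ Finset.Ioc m j, Real.sin (k * θ)
            = ∑ k ∈ Finset.Ioc 0 j, Real.sin (k * θ) - ∑ k ∈ Finset.Ioc 0 m, Real.sin (k * θ) := by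
          have hu := Finset.sum_union (f := fun k : ℕ => Real.sin (k * θ)) hd
          rw [Finset.Ioc_union_Ioc_eq_Ioc (Nat.zero_le m) (le_of_lt hj)] at hu
          linarith
        rw [h1]
        calc |∑ k ∈ Finset.Ioc 0 j, Real.sin (k * θ) - ∑ k ∈ Finset.Ioc 0 m, Real.sin (k * θ)|
            ≤ |∑ k ∈ Finset.Ioc 0 j, Real.sin (k * θ)| + |∑ k ∈ Finset.Ioc 0 m, Real.sin (k * θ)| :=
              abs_sub _ _
          _ ≤ 1 / Real.sin (θ / 2) + 1 / Real.sin (θ / 2) :=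
              add_le_add (dirichlet θ hθpos hθlt j) (dirichlet θ hθpos hθlt m)
          _ = 2 / Real.sin (θ / 2) := by ring
    have tail : |∑ k ∈ Finset.Ioc m n, Real.sin (k * θ) / k| ≤ 2 := by
      have habel := abel_bound (fun k => Real.sin (k * θ)) (fun k => ((k : ℝ))⁻¹) m
        (2 / Real.sin (θ / 2))
        (fun k _ => by positivity)
        (fun k hk => by
          have hk0 : (0:ℝ) < k := by
            have : 1 ≤ k := le_trans hm1 hk
            exact_mod_cast this
          have : ((k:ℝ) + 1)⁻¹ ≤ ((k:ℝ))⁻¹ := by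
            apply inv_anti₀ hk0; linarith
          simpa using this)
        hS n
      have heq : ∑ k ∈ Finset.Ioc m n, Real.sin (k * θ) / k
          = ∑ k ∈ Finset.Ioc m n, Real.sin (k * θ) * ((k:ℝ))⁻¹ := by
        refine Finset.sum_congr rfl fun k _ => ?_
        rw [div_eq_mul_inv]
      rw [heq]
      refine le_trans habel ?_
      have h1 : 2 / Real.sin (θ / 2) ≤ 2 * π / δ := by
        rw [div_le_div_iff₀ hs (by positivity)]
        have := (div_le_iff₀ (by positivity : (0:ℝ) < π)).1 (le_refl (δ / π))
        nlinarith [hsδ]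
      have h2 : ((m:ℝ) + 1)⁻¹ ≤ δ / π := by
        calc ((m:ℝ) + 1)⁻¹ ≤ (π / δ)⁻¹ := inv_anti₀ (by positivity) (le_of_lt hmlt)
          _ = δ / π := by rw [inv_div]
      calc (2 / Real.sin (θ / 2)) * (((m:ℕ)+1 : ℕ) : ℝ)⁻¹
          ≤ (2 * π / δ) * (δ / π) := by
            push_cast
            exact mul_le_mul h1 h2 (by positivity) (by positivity)
        _ = 2 := by field_simp
    calc |∑ k ∈ Finset.Ioc 0 n, Real.sin (k * θ) / k|
        ≤ |∑ k ∈ Finset.Ioc 0 m, Real.sin (k * θ) / k| + |∑ k ∈ Finset.Ioc m n, Real.sin (k * θ) / k| := by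
          rw [hsplit (fun k => Real.sin (k * θ) / k)]
          exact abs_add_le _ _
      _ ≤ π + 2 := add_le_add (head m le_rfl) tail


/-- The coefficient finsupp: `c k = 1/k` for `0 < |k| ≤ N`. -/
noncomputable def cfun (N : ℕ) : ℤ →₀ ℂ where
  support := (Finset.Icc (-(N:ℤ)) (N:ℤ)).erase 0
  toFun k := if k ∈ (Finset.Icc (-(N:ℤ)) (N:ℤ)).erase 0 then (k:ℂ)⁻¹ else 0
  mem_support_toFun k := by
    show k ∈ _ ↔ (if k ∈ (Finset.Icc (-(N:ℤ)) (N:ℤ)).erase 0 then (k:ℂ)⁻¹ else 0) ≠ 0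
    constructor
    · intro hk
      rw [if_pos hk]
      have hk0 : k ≠ 0 := (Finset.mem_erase.1 hk).1
      simp [hk0]
    · intro h
      by_contra hk
      rw [if_neg hk] at h
      exact h rfl

lemma cfun_support (N : ℕ) : (cfun N).support = (Finset.Icc (-(N:ℤ)) (N:ℤ)).erase 0 := rfl

lemma cfun_apply {N : ℕ} {k : ℤ} (hk : k ∈ (Finset.Icc (-(N:ℤ)) (N:ℤ)).erase 0) :
    cfun N k = (k:ℂ)⁻¹ := if_pos hk

lemma int_sum (N : ℕ) (F : ℤ → ℂ) :
    ∑ k ∈ Finset.Icc (1:ℤ) (N:ℤ), F k = ∑ k ∈ Finset.Icc 1 N, F (k:ℤ) := by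
  refine Finset.sum_nbij' (i := fun k => k.toNat) (j := fun k => (k:ℤ)) ?_ ?_ ?_ ?_ ?_
  · intro a ha
    simp only [Finset.mem_Icc] at ha ⊢
    omega
  · intro a ha
    simp only [Finset.mem_Icc] at ha ⊢
    omega
  · intro a ha
    simp only [Finset.mem_Icc] at ha
    beta_reduce
    omega
  · intro a ha
    simp
  · intro a ha
    simp only [Finset.mem_Icc] at ha
    beta_reduce
    congr 1
    omega

lemma pair_sum (N : ℕ) (G : ℤ → ℂ) :
    ∑ k ∈ (Finset.Icc (-(N:ℤ)) (N:ℤ)).erase 0, G k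
      = ∑ k ∈ Finset.Icc (1:ℤ) (N:ℤ), (G k + G (-k)) := by
  have hset : (Finset.Icc (-(N:ℤ)) (N:ℤ)).erase 0
      = Finset.Icc (1:ℤ) (N:ℤ) ∪ (Finset.Icc (1:ℤ) (N:ℤ)).image (fun k => -k) := by
    ext k
    simp only [Finset.mem_erase, Finset.mem_Icc, Finset.mem_union, Finset.mem_image]
    constructor
    · rintro ⟨h0, h1, h2⟩
      rcases lt_or_gt_of_ne h0 with h | h
      · right; exact ⟨-k, by omega, by omega⟩
      · left; omega
    · rintro (⟨h1, h2⟩ | ⟨a, ⟨ha1, ha2⟩, rfl⟩) <;> omega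
  have hdisj : Disjoint (Finset.Icc (1:ℤ) (N:ℤ))
      ((Finset.Icc (1:ℤ) (N:ℤ)).image (fun k => -k)) := by
    rw [Finset.disjoint_left]
    rintro k hk1 hk2
    simp only [Finset.mem_Icc, Finset.mem_image] at hk1 hk2
    obtain ⟨a, ha, rfl⟩ := hk2
    omega
  rw [hset, Finset.sum_union hdisj,
    Finset.sum_image (by intro a _ b _ h; simp only [neg_inj] at h; omega), ← Finset.sum_add_distrib]


lemma exp_term (k θ : ℝ) :
    Complex.exp (Complex.I * (k:ℂ) * (θ:ℂ)) - Complex.exp (Complex.I * (-(k:ℂ)) * (θ:ℂ))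
      = 2 * ((Real.sin (k * θ) : ℝ) : ℂ) * Complex.I := by
  have h1 : Complex.I * (k:ℂ) * (θ:ℂ) = ((k * θ : ℝ) : ℂ) * Complex.I := by push_cast; ring
  have h2 : Complex.I * (-(k:ℂ)) * (θ:ℂ) = (-((k * θ : ℝ) : ℂ)) * Complex.I := by push_cast; ring
  rw [h1, h2, Complex.exp_mul_I, Complex.exp_mul_I, Complex.cos_neg, Complex.sin_neg,
    Complex.ofReal_sin, Complex.ofReal_mul]
  ring

end RieszAux

open RieszAux Finset Real in
/-- **The Riesz (analytic) projection is unbounded in the sup norm.**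
For every `C > 0` there is a trigonometric polynomial `f(θ) = Σ_{k} c_k e^{ikθ}`
(with finitely many nonzero coefficients) such that
`‖Σ_{k>0} c_k e^{ikθ}‖_∞ > C ‖f‖_∞`, the sup norm taken over `θ ∈ [0, 2π]`. -/
theorem riesz_projection_unbounded :
    ∀ C : ℝ, 0 < C → ∃ c : ℤ →₀ ℂ,
      C * (⨆ θ : Set.Icc (0 : ℝ) (2 * Real.pi),
          ‖∑ k ∈ c.support, c k * Complex.exp (Complex.I * (k : ℂ) * ((θ : ℝ) : ℂ))‖)
        < ⨆ θ : Set.Icc (0 : ℝ) (2 * Real.pi),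
          ‖∑ k ∈ c.support.filter (fun k => 0 < k),
              c k * Complex.exp (Complex.I * (k : ℂ) * ((θ : ℝ) : ℂ))‖ := by
  intro C hC
  have hπ := Real.pi_pos
  set K : ℝ := 2 * (π + 2) with hK
  have hK0 : 0 < K := by positivity
  obtain ⟨N, hN⟩ :=
    (Real.tendsto_sum_range_one_div_nat_succ_atTop.eventually_gt_atTop (C * K)).exists
  refine ⟨cfun N, ?_⟩
  haveI : Nonempty (Set.Icc (0:ℝ) (2 * π)) := ⟨⟨0, le_refl 0, by positivity⟩⟩
  -- the harmonic sum
  set H : ℝ := ∑ k ∈ Finset.Icc 1 N, ((k:ℝ))⁻¹ with hH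
  have hHN : C * K < H := by
    rw [hH, ← Finset.Ico_add_one_right_eq_Icc, Finset.sum_Ico_eq_sum_range]
    simpa [one_div, add_comm] using hN
  have hH0 : 0 ≤ H := Finset.sum_nonneg fun k _ => by positivity
  -- rewrite the full sum
  have hfull : ∀ θ : ℝ,
      ∑ k ∈ (cfun N).support, cfun N k * Complex.exp (Complex.I * (k : ℂ) * (θ:ℂ))
        = 2 * Complex.I * ((∑ k ∈ Finset.Ioc 0 N, Real.sin (k * θ) / k : ℝ) : ℂ) := by
    intro θ
    rw [cfun_support]
    rw [Finset.sum_congr rfl (fun k hk => by rw [cfun_apply hk])]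
    rw [pair_sum N (fun k => (k:ℂ)⁻¹ * Complex.exp (Complex.I * (k : ℂ) * (θ:ℂ)))]
    rw [int_sum]
    rw [← Finset.Icc_add_one_left_eq_Ioc, Complex.ofReal_sum, Finset.mul_sum]
    refine Finset.sum_congr rfl fun k hk => ?_
    have hk1 : 1 ≤ k := (Finset.mem_Icc.1 hk).1
    have hk0 : ((k:ℕ) : ℂ) ≠ 0 := by
      simp only [Ne, Nat.cast_eq_zero]; omega
    have hterm := exp_term k θ
    push_cast at hterm ⊢
    rw [inv_neg]
    linear_combination (((k:ℕ):ℂ))⁻¹ * hterm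
  -- the positive-frequency part
  have hfilter : ((cfun N).support.filter (fun k => 0 < k)) = Finset.Icc (1:ℤ) (N:ℤ) := by
    rw [cfun_support]
    ext k
    simp only [Finset.mem_filter, Finset.mem_erase, Finset.mem_Icc]
    omega
  have hposval : ∀ θ : ℝ,
      ∑ k ∈ (cfun N).support.filter (fun k => 0 < k),
          cfun N k * Complex.exp (Complex.I * (k : ℂ) * (θ:ℂ))
        = ∑ k ∈ Finset.Icc 1 N, ((k:ℂ))⁻¹ * Complex.exp (Complex.I * ((k:ℕ) : ℂ) * (θ:ℂ)) := by
    intro θ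
    rw [hfilter]
    rw [Finset.sum_congr rfl (fun k hk => by
      rw [cfun_apply (by
        simp only [Finset.mem_erase, Finset.mem_Icc]
        simp only [Finset.mem_Icc] at hk
        omega)])]
    rw [int_sum N (fun k => (k:ℂ)⁻¹ * Complex.exp (Complex.I * (k : ℂ) * (θ:ℂ)))]
    push_cast
    rfl
  -- bound the sup of the full sum
  have hsupf : (⨆ θ : Set.Icc (0:ℝ) (2 * π),
      ‖∑ k ∈ (cfun N).support, cfun N k * Complex.exp (Complex.I * (k : ℂ) * ((θ:ℝ):ℂ))‖) ≤ K := by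
    refine ciSup_le fun θ => ?_
    rw [hfull θ]
    rw [norm_mul, Complex.norm_real]
    have h2I : ‖(2 : ℂ) * Complex.I‖ = 2 := by
      simp
    rw [h2I, Real.norm_eq_abs]
    have := sin_sum_bound N θ θ.2.1 θ.2.2
    rw [hK]
    linarith
  -- lower bound the sup of the positive part
  have hbdd : BddAbove (Set.range fun θ : Set.Icc (0:ℝ) (2 * π) =>
      ‖∑ k ∈ (cfun N).support.filter (fun k => 0 < k),
          cfun N k * Complex.exp (Complex.I * (k : ℂ) * ((θ:ℝ):ℂ))‖) := by
    refine ⟨H, ?_⟩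
    rintro x ⟨θ, rfl⟩
    beta_reduce
    rw [hposval θ]
    calc ‖∑ k ∈ Finset.Icc 1 N, ((k:ℂ))⁻¹ * Complex.exp (Complex.I * ((k:ℕ) : ℂ) * ((θ:ℝ):ℂ))‖
        ≤ ∑ k ∈ Finset.Icc 1 N, ‖((k:ℂ))⁻¹ * Complex.exp (Complex.I * ((k:ℕ) : ℂ) * ((θ:ℝ):ℂ))‖ :=
          norm_sum_le _ _
      _ ≤ H := by
          rw [hH]
          refine Finset.sum_le_sum fun k _ => ?_
          rw [norm_mul]
          have hexp : ‖Complex.exp (Complex.I * ((k:ℕ) : ℂ) * ((θ:ℝ):ℂ))‖ = 1 := by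
            rw [show Complex.I * ((k:ℕ) : ℂ) * ((θ:ℝ):ℂ) = (((k:ℝ) * θ : ℝ) : ℂ) * Complex.I by
              push_cast; ring]
            exact Complex.norm_exp_ofReal_mul_I _
          rw [hexp, mul_one, norm_inv, Complex.norm_natCast]
  have hval0 : ‖∑ k ∈ (cfun N).support.filter (fun k => 0 < k),
      cfun N k * Complex.exp (Complex.I * (k : ℂ) * (((0:ℝ)):ℂ))‖ = H := by
    rw [hposval 0]
    have : ∀ k ∈ Finset.Icc 1 N,
        ((k:ℂ))⁻¹ * Complex.exp (Complex.I * ((k:ℕ) : ℂ) * (((0:ℝ)):ℂ)) = ((k:ℂ))⁻¹ := by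
      intro k _
      simp
    rw [Finset.sum_congr rfl this]
    rw [show ∑ k ∈ Finset.Icc 1 N, ((k:ℂ))⁻¹ = ((H : ℝ) : ℂ) by rw [hH]; push_cast; rfl]
    rw [Complex.norm_real, Real.norm_eq_abs, abs_of_nonneg hH0]
  have hsupg : H ≤ ⨆ θ : Set.Icc (0:ℝ) (2 * π),
      ‖∑ k ∈ (cfun N).support.filter (fun k => 0 < k),
          cfun N k * Complex.exp (Complex.I * (k : ℂ) * ((θ:ℝ):ℂ))‖ := by
    rw [← hval0]
    exact le_ciSup hbdd ⟨0, le_refl 0, by positivity⟩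
  calc C * (⨆ θ : Set.Icc (0:ℝ) (2 * π),
        ‖∑ k ∈ (cfun N).support, cfun N k * Complex.exp (Complex.I * (k : ℂ) * ((θ:ℝ):ℂ))‖)
      ≤ C * K := mul_le_mul_of_nonneg_left hsupf (le_of_lt hC)
    _ < H := hHN
    _ ≤ _ := hsupg
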